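/- An abelian group G has the matching property if and only if G is torsion-free or cyclic of prime order. -/

import Mathlib

/-- A matching from the finite subset `A` to the finite subset `B` of an additive abelian
group is a bijection `f : A → B` such that `a + f a ∉ A` for all `a ∈ A`. -/
def IsMatching {G : Type*} [AddCommGroup G] (A B : Finset G) (f : G → G) : Prop :=
  Set.BijOn f (A : Set G) (B : Set G) ∧ ∀ a ∈ A, a + f a ∉ A

/-- `G` has the matching property if for all non-empty finite subsets `A, B` of `G` with
`#A = #B` and `0 ∉ B`, there exists a matching from `A` to `B`. -/
def HasMatchingProperty (G : Type*) [AddCommGroup G] : Prop :=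
  ∀ A B : Finset G, A.Nonempty → B.Nonempty → A.card = B.card → (0 : G) ∉ B →
    ∃ f : G → G, IsMatching A B f

/-- A monoid is torsion-free if no nontrivial element has finite order
(the former Mathlib definition `AddMonoid.IsTorsionFree`, removed since). -/
def AddMonoid.IsTorsionFree (G : Type*) [AddMonoid G] : Prop :=
  ∀ g : G, g ≠ 0 → ¬IsOfFinAddOrder g

open Finset
open scoped Pointwise

/-- Key lemma: if a Cauchy-Davenport-type bound holds for sumsets contained in `A`,
then a matching from `A` to `B` exists, via Hall's marriage theorem. -/
lemma exists_matching_of_cd {G : Type*} [AddCommGroup G] [DecidableEq G]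
    (A B : Finset G) (hcard : A.card = B.card) (hB0 : (0 : G) ∉ B)
    (hCD : ∀ S T : Finset G, S.Nonempty → T.Nonempty → S + T ⊆ A →
      S.card + T.card - 1 ≤ A.card) :
    ∃ f : G → G, IsMatching A B f := by
  -- the bipartite "allowed" sets
  set t : {a // a ∈ A} → Finset G := fun a => B.filter (fun b => a.1 + b ∉ A) with ht
  -- Hall's condition
  have hall : ∀ s : Finset {a // a ∈ A}, s.card ≤ (s.biUnion t).card := by
    intro s
    rcases s.eq_empty_or_nonempty with rfl | hs
    · simp
    set S : Finset G := s.image Subtype.val with hS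
    have hSA : S ⊆ A := by
      intro a ha
      simp only [hS, mem_image] at ha
      obtain ⟨⟨a', ha'⟩, _, rfl⟩ := ha
      exact ha'
    have hScard : S.card = s.card := Finset.card_image_of_injective _ Subtype.val_injective
    set T : Finset G := B.filter (fun b => ∀ a ∈ S, a + b ∈ A) with hT
    have h0T : (0 : G) ∉ T := fun h => hB0 (mem_filter.1 h).1
    have hsub : S + insert (0 : G) T ⊆ A := by
      intro z hz
      rw [Finset.mem_add] at hz
      obtain ⟨a, ha, c, hc, rfl⟩ := hz
      rcases Finset.mem_insert.1 hc with rfl | hc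
      · simpa using hSA ha
      · exact (mem_filter.1 hc).2 a ha
    have hbound := hCD S (insert 0 T) (hs.image _) (insert_nonempty _ _) hsub
    rw [Finset.card_insert_of_notMem h0T] at hbound
    have hST : S.card + T.card ≤ B.card := by omega
    -- identify the biUnion
    have hbi : s.biUnion t = B \ T := by
      ext b
      simp only [mem_biUnion, ht, mem_filter, mem_sdiff, hT]
      constructor
      · rintro ⟨a, ha, hb, hab⟩
        exact ⟨hb, fun h => hab (h.2 a.1 (Finset.mem_image_of_mem Subtype.val ha))⟩
      · rintro ⟨hb, hnot⟩
        have : ¬ ∀ a ∈ S, a + b ∈ A := fun h => hnot ⟨hb, h⟩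
        push_neg at this
        obtain ⟨a, haS, ha⟩ := this
        simp only [hS, mem_image] at haS
        obtain ⟨a', ha', rfl⟩ := haS
        exact ⟨a', ha', hb, ha⟩
    have hTB : T ⊆ B := Finset.filter_subset _ _
    clear_value S T
    rw [hbi, Finset.card_sdiff_of_subset hTB]
    omega
  obtain ⟨f0, hf0inj, hf0mem⟩ :=
    (Finset.all_card_le_biUnion_card_iff_exists_injective t).1 hall
  classical
  set F : G → G := fun x => if h : x ∈ A then f0 ⟨x, h⟩ else x with hFdef
  have hFa : ∀ (a : G) (ha : a ∈ A), F a = f0 ⟨a, ha⟩ := fun a ha => dif_pos ha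
  refine ⟨F, ?_, ?_⟩
  · have hmaps : ∀ a ∈ A, F a ∈ B := by
      intro a ha
      rw [hFa a ha]
      exact (mem_filter.1 (hf0mem ⟨a, ha⟩)).1
    have hinj : Set.InjOn F (A : Set G) := by
      intro a ha b hb hab
      simp only [Finset.mem_coe] at ha hb
      rw [hFa a ha, hFa b hb] at hab
      exact Subtype.ext_iff.1 (hf0inj hab)
    have himage : A.image F = B := by
      apply Finset.eq_of_subset_of_card_le
      · intro b hb
        obtain ⟨a, ha, rfl⟩ := Finset.mem_image.1 hb
        exact hmaps a ha
      · rw [Finset.card_image_of_injOn (fun a ha b hb h => hinj ha hb h), hcard]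
    exact ⟨fun a ha => by simpa using hmaps a (Finset.mem_coe.1 ha), hinj,
      fun b hb => by
        obtain ⟨a, ha, rfl⟩ := Finset.mem_image.1 (himage ▸ Finset.mem_coe.1 hb)
        exact ⟨a, ha, rfl⟩⟩
  · intro a ha
    rw [hFa a ha]
    exact (mem_filter.1 (hf0mem ⟨a, ha⟩)).2

/-- If `G` has a finite nontrivial proper subgroup, it fails the matching property. -/
lemma not_hasMatchingProperty {G : Type*} [AddCommGroup G] (H : AddSubgroup G)
    (hfin : (H : Set G).Finite) (hnb : H ≠ ⊥) (x : G) (hx : x ∉ H) :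
    ¬ HasMatchingProperty G := by
  classical
  intro hmp
  obtain ⟨h0, hh0H, hh0⟩ : ∃ h0, h0 ∈ H ∧ h0 ≠ 0 := by
    by_contra hcon
    push_neg at hcon
    exact hnb (le_antisymm (fun g hg => by
      rcases eq_or_ne g 0 with rfl | hg0
      · exact AddSubgroup.zero_mem ⊥
      · exact absurd (hcon g hg) (by simpa using hg0)) bot_le)
  set A : Finset G := hfin.toFinset with hA
  have h0A : (0 : G) ∈ A := hfin.mem_toFinset.2 (AddSubgroup.zero_mem H)
  have hxA : x ∉ A := fun h => hx (hfin.mem_toFinset.1 h)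
  set B : Finset G := insert x (A.erase 0) with hB
  have hxe : x ∉ A.erase 0 := fun h => hxA (Finset.mem_of_mem_erase h)
  have hcard : A.card = B.card := by
    rw [hB, Finset.card_insert_of_notMem hxe, Finset.card_erase_of_mem h0A]
    have : 1 ≤ A.card := Finset.card_pos.2 ⟨0, h0A⟩
    omega
  have h0B : (0 : G) ∉ B := by
    rw [hB]
    simp only [Finset.mem_insert, Finset.mem_erase]
    rintro (rfl | ⟨h, _⟩)
    · exact hx (AddSubgroup.zero_mem H)
    · exact h rfl
  obtain ⟨f, ⟨hmaps, hinj, hsurj⟩, hmatch⟩ :=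
    hmp A B ⟨0, h0A⟩ ⟨x, Finset.mem_insert_self _ _⟩ hcard h0B
  have hh0B : h0 ∈ B := by
    rw [hB]
    exact Finset.mem_insert_of_mem (Finset.mem_erase.2 ⟨hh0, hfin.mem_toFinset.2 hh0H⟩)
  obtain ⟨a, ha, hfa⟩ := hsurj (Finset.mem_coe.2 hh0B)
  have haA : a ∈ A := Finset.mem_coe.1 ha
  have haH : a ∈ H := hfin.mem_toFinset.1 haA
  apply hmatch a haA
  rw [hfa]
  exact hfin.mem_toFinset.2 (AddSubgroup.add_mem H haH hh0H)

theorem matching_property_iff_torsionFree_or_prime_cyclic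
    (G : Type*) [AddCommGroup G] :
    HasMatchingProperty G ↔
      (AddMonoid.IsTorsionFree G ∨
        (IsAddCyclic G ∧ ∃ p : ℕ, p.Prime ∧ Nat.card G = p)) := by
  classical
  constructor
  · -- matching property → classification
    intro hmp
    by_contra hcon
    push_neg at hcon
    obtain ⟨htf, hcyc⟩ := hcon
    rw [AddMonoid.IsTorsionFree] at htf
    push_neg at htf
    obtain ⟨g, hg0, hgfin⟩ := htf
    -- produce an element of prime order
    set n := addOrderOf g with hn
    have hn0 : n ≠ 0 := hgfin.addOrderOf_pos.ne'
    have hn1 : n ≠ 1 := fun h => hg0 (AddMonoid.addOrderOf_eq_one_iff.1 h)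
    set p := n.minFac with hp
    have hpp : p.Prime := Nat.minFac_prime hn1
    set h : G := (n / p) • g with hh
    have hord : addOrderOf h = p :=
      addOrderOf_nsmul_addOrderOf_sub hn0 (Nat.minFac_dvd n)
    have hh0 : h ≠ 0 := fun hz => hpp.ne_one (by rw [← hord, hz]; simp)
    have hhfin : IsOfFinAddOrder h := by
      rw [← addOrderOf_pos_iff, hord]; exact hpp.pos
    set H := AddSubgroup.zmultiples h with hH
    by_cases htop : ∀ x : G, x ∈ H
    · -- G is cyclic of prime order, contradiction
      have hGc : IsAddCyclic G := ⟨h, fun x => by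
        obtain ⟨k, hk⟩ := AddSubgroup.mem_zmultiples_iff.1 (htop x)
        exact ⟨k, hk⟩⟩
      refine hcyc hGc p hpp ?_
      have hHt : H = ⊤ := by
        ext x; simp [htop x]
      have : Nat.card H = Nat.card G := by rw [hHt]; exact AddSubgroup.card_top
      rw [← this, hH, Nat.card_zmultiples, hord]
    · push_neg at htop
      obtain ⟨x, hx⟩ := htop
      exact not_hasMatchingProperty H hhfin.finite_zmultiples
        (fun hb => hh0 (AddSubgroup.zmultiples_eq_bot.1 hb)) x hx hmp
  · -- classification → matching property
    rintro (htf | ⟨_, p, hpp, hcardG⟩) <;> intro A B hA hB hAB hB0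
    · exact exists_matching_of_cd A B hAB hB0 (fun S T hS hT hsub =>
        (@cauchy_davenport_of_isAddTorsionFree G _ _ (IsAddTorsionFree.of_not_isOfFinAddOrder htf) _ _ hS hT).trans
          (Finset.card_le_card hsub))
    · have hfin : Finite G := Nat.finite_of_card_ne_zero (by rw [hcardG]; exact hpp.pos.ne')
      have hfint : Fintype G := Fintype.ofFinite G
      have hAlt : A.card < p := by
        have hBsub : B ⊆ Finset.univ.erase 0 := fun b hb =>
          Finset.mem_erase.2 ⟨fun h => hB0 (h ▸ hb), Finset.mem_univ b⟩
        have := Finset.card_le_card hBsub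
        rw [Finset.card_erase_of_mem (Finset.mem_univ 0)] at this
        have hcu : (Finset.univ : Finset G).card = p := by
          rw [← hcardG, Nat.card_eq_fintype_card, Finset.card_univ]
        have hp1 : 1 ≤ p := hpp.one_lt.le
        omega
      refine exists_matching_of_cd A B hAB hB0 (fun S T hS hT hsub => ?_)
      have hmin : (p : ℕ∞) ≤ AddMonoid.minOrder G := by
        rw [AddMonoid.le_minOrder]
        intro a ha _
        have hdvd : addOrderOf a ∣ p := hcardG ▸ addOrderOf_dvd_natCard a
        rcases (Nat.Prime.eq_one_or_self_of_dvd hpp _ hdvd) with h1 | hp'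
        · exact absurd (AddMonoid.addOrderOf_eq_one_iff.1 h1) ha
        · exact_mod_cast hp'.ge
      have hcd := cauchy_davenport_minOrder_add hS hT
      have hle := Finset.card_le_card hsub
      rcases min_le_iff.1 hcd with h1 | h2
      · have : (p : ℕ∞) ≤ ((S + T).card : ℕ∞) := hmin.trans h1
        have hps : p ≤ (S + T).card := by exact_mod_cast this
        omega
      · exact (by exact_mod_cast h2 : S.card + T.card - 1 ≤ (S + T).card).trans hle
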